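/- In the crystal 𝒯^{↘} of semistandard tableaux of anti-normal shapes λ^π (λ′ even, ℓ(λ) ≤ n) in the alphabet {n̄ < ⋯ < 1̄}, the operator f̃_n defined by the signature rule on columns — assigning + to a column whose top entry is > n−1̄ (or an empty column), − to a column containing both n−1̄ and n̄, and adding a vertical domino (n̄ over n−1̄) at the column of the leftmost + in the reduced signature — sends a semistandard tableau of anti-normal shape with even conjugate shape to another such tableau (when nonzero). -/

import Mathlib

/-!  Entries of tableaux are barred letters `k̄ ∈ {n̄ < ⋯ < 1̄}`, encoded by the natural
number `k`; the alphabet order is the reverse of the order on `ℕ`.  An anti-normal tableau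
is encoded as its list of columns, rightmost column first, each column listed from top to
bottom; in the encoding a column is strictly decreasing (`ℕ`-order) from top to bottom. -/

/-- Replace the first entry `y ≤ x` of a column by `x`, returning the bumped entry. -/
def replFirst (x : ℕ) : List ℕ → List ℕ × Option ℕ
  | [] => ([], none)
  | z :: t =>
    if z ≤ x then (x :: t, some z)
    else
      let p := replFirst x t
      (z :: p.1, p.2)

/-- Reverse Schensted column insertion of `x` into an anti-normal tableau (starting from
the rightmost column); returns the new tableau and the index of the column in which a new
box was created. -/
def insB (x : ℕ) : List (List ℕ) → List (List ℕ) × ℕ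
  | [] => ([[x]], 0)
  | c :: rest =>
    match c with
    | [] => ([x] :: rest, 0)
    | z :: _ =>
      if z < x then ((x :: c) :: rest, 0)
      else
        match replFirst x c with
        | (c', some y) =>
          let p := insB y rest
          (c' :: p.1, p.2 + 1)
        | (_, none) => ((x :: c) :: rest, 0)

/-- One Burge step: insert `b` by reverse column insertion, then add `a` directly above the
newly created box. -/
def insPair (a b : ℕ) (T : List (List ℕ)) : List (List ℕ) :=
  let p := insB b T
  p.1.set p.2 (a :: p.1.getD p.2 [])

/-- The Burge insertion tableau `P^{↘}(a,b)`: the biletters `(a_r,b_r), …, (a_1,b_1)` are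
inserted in that order. -/
def burge (L : List (ℕ × ℕ)) : List (List ℕ) :=
  L.foldr (fun p T => insPair p.1 p.2 T) []

/-- Biwords of `Ω`: letters in `[n̄]`, `a_k < b_k` in the bar order (i.e. `b_k < a_k` in
`ℕ`), and biletters weakly increasing for `(a,b) < (c,d) ⟺ a < c ∨ (a = c ∧ b > d)`
(bar order), i.e. in `ℕ`: `c < a ∨ (a = c ∧ b ≤ d)`. -/
def IsBiword (n : ℕ) (L : List (ℕ × ℕ)) : Prop :=
  (∀ p ∈ L, 1 ≤ p.2 ∧ p.2 < p.1 ∧ p.1 ≤ n) ∧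
  L.Chain' (fun p q => q.1 < p.1 ∨ (p.1 = q.1 ∧ p.2 ≤ q.2))

/-- Semistandard tableau of anti-normal shape, in the encoding above: columns nonempty with
entries in `[1,n]`, strictly decreasing (`ℕ`) top to bottom; column lengths weakly decrease
from right to left, and along each row (aligned at the bottom) the entries weakly decrease
(`ℕ`) from left to right, i.e. weakly increase in the bar order. -/
def IsAntiSSYT (n : ℕ) (T : List (List ℕ)) : Prop :=
  (∀ col ∈ T, col ≠ [] ∧ (∀ x ∈ col, 1 ≤ x ∧ x ≤ n) ∧ col.Chain' (· > ·)) ∧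
  T.Chain' (fun cr cl => cl.length ≤ cr.length ∧
    ∀ r, r < cl.length → cr.getD (cr.length - 1 - r) 0 ≤ cl.getD (cl.length - 1 - r) 0)

/-- The sign of a column for the operator `f̃_n` on `𝒯^{↘}`: `+` (`1`) if the column is
empty or its top entry is bar-greater than `n-1̄` (`ℕ`-value `< n-1`), `-` (`-1`) if the
column contains both `n-1̄` and `n̄`, and `·` (`0`) otherwise. -/
def colSign (n : ℕ) : List ℕ → Int
  | [] => 1
  | col@(z :: _) =>
    if (n - 1) ∈ col ∧ n ∈ col then -1 else if z < n - 1 then 1 else 0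

/-- The operator `f̃_n` on `𝒯^{↘}`: compute the signature of the columns (enumerated from
the right, with one further empty column), cancel pairs `(+,-)` with the `+` before the
`-`, and add a vertical domino `n̄` over `n-1̄` on top of the column of the first remaining
`+`. -/
def ftn (n : ℕ) (T : List (List ℕ)) : List (List ℕ) :=
  let sigs : List (Int × ℕ) :=
    ((((T ++ [[]]).zipIdx.map Prod.swap)).map fun p : ℕ × List ℕ => (colSign n p.2, p.1)).filter
      fun p : Int × ℕ => p.1 ≠ 0
  let stack := sigs.foldl
    (fun (st : List (Int × ℕ)) (p : Int × ℕ) =>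
      if p.1 = -1 ∧ st.head?.map Prod.fst = some 1 then st.tail else p :: st)
    ([] : List (Int × ℕ))
  match stack.reverse.find? (fun p : Int × ℕ => p.1 = 1) with
  | some p =>
    if p.2 < T.length then T.set p.2 (n :: (n - 1) :: T.getD p.2 []) else T ++ [[n, n - 1]]
  | none => T

/-- The operator `f̃_n` sends a semistandard tableau of anti-normal shape with even
conjugate shape to another such tableau. -/
private lemma colValid_getD_le {n : ℕ} {c : List ℕ} (hv : ∀ x ∈ c, 1 ≤ x ∧ x ≤ n) (k : ℕ) :
    c.getD k 0 ≤ n := by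
  rcases lt_or_ge k c.length with h | h
  · rw [List.getD_eq_getElem _ _ h]; exact (hv _ (List.getElem_mem _)).2
  · rw [List.getD_eq_default _ _ h]; exact Nat.zero_le n

private lemma colValid_getD_lt {n : ℕ} {c : List ℕ} (hv : ∀ x ∈ c, 1 ≤ x ∧ x ≤ n)
    (hc : c.Chain' (· > ·)) {k : ℕ} (h0 : 0 < k) (hk : k < c.length) :
    c.getD k 0 ≤ n - 1 := by
  have hpw := (List.isChain_iff_pairwise).1 hc
  have h01 : (0:ℕ) < c.length := lt_trans h0 hk
  have hgt := (List.pairwise_iff_getElem.1 hpw) 0 k h01 hk h0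
  rw [List.getD_eq_getElem _ _ hk]
  have hle := colValid_getD_le hv 0
  rw [List.getD_eq_getElem _ _ h01] at hle
  omega

private lemma colSign_one {n : ℕ} {c : List ℕ} (h : colSign n c = 1) :
    c = [] ∨ ∃ z t, c = z :: t ∧ z < n - 1 := by
  cases c with
  | nil => exact Or.inl rfl
  | cons z t =>
    right
    refine ⟨z, t, rfl, ?_⟩
    simp only [colSign] at h
    split_ifs at h with h1 h2 <;> omega

private lemma colSign_ne_one {n : ℕ} {c : List ℕ}
    (hv : ∀ x ∈ c, 1 ≤ x ∧ x ≤ n) (hc : c.Chain' (· > ·)) (h : colSign n c ≠ 1) :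
    ∃ z t, c = z :: t ∧ n - 1 ≤ z := by
  cases c with
  | nil => exact absurd rfl h
  | cons z t =>
    refine ⟨z, t, rfl, ?_⟩
    simp only [colSign] at h
    split_ifs at h with h1 h2
    · have hn : n ∈ z :: t := h1.2
      have hpw := (List.isChain_iff_pairwise).1 hc
      rcases List.mem_cons.1 hn with rfl | hn
      · omega
      · have h3 := (List.pairwise_cons.1 hpw).1 n hn
        have h4 := (hv z List.mem_cons_self).2
        omega
    · omega
    · omega

private lemma fold_struct {α : Type*} (f : List α → α → List α)
    (hf : ∀ st p, f st p = p :: st ∨ f st p = st.tail) :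
    ∀ (l st : List α), ∃ F k, l.foldl f st = F ++ st.drop k ∧ ∀ x ∈ F, x ∈ l := by
  intro l
  induction l with
  | nil => exact fun st => ⟨[], 0, by simp, by simp⟩
  | cons a l ih =>
    intro st
    rcases hf st a with h | h
    · rw [List.foldl_cons, h]
      obtain ⟨F, k, hEq, hF⟩ := ih (a :: st)
      rcases k with _ | k'
      · refine ⟨F ++ [a], 0, by simpa using hEq, ?_⟩
        intro x hx
        rcases List.mem_append.1 hx with hx | hx
        · exact List.mem_cons_of_mem _ (hF x hx)
        · simp at hx; simp [hx]
      · exact ⟨F, k', by simpa using hEq, fun x hx => List.mem_cons_of_mem _ (hF x hx)⟩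
    · rw [List.foldl_cons, h, ← List.drop_one]
      obtain ⟨F, k, hEq, hF⟩ := ih (st.drop 1)
      rw [List.drop_drop] at hEq
      exact ⟨F, 1 + k, hEq, fun x hx => List.mem_cons_of_mem _ (hF x hx)⟩

private lemma ftn_spec (n : ℕ) (T : List (List ℕ)) :
    ftn n T = T ∨
    ∃ i ≤ T.length, colSign n ((T ++ [[]]).getD i []) = 1 ∧
      (∀ j, j + 1 = i → colSign n ((T ++ [[]]).getD j []) ≠ 1) ∧
      ((i < T.length ∧ ftn n T = T.set i (n :: (n - 1) :: T.getD i [])) ∨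
       (i = T.length ∧ ftn n T = T ++ [[n, n - 1]])) := by
  classical
  set L := T ++ [[]] with hL
  set f : List (Int × ℕ) → (Int × ℕ) → List (Int × ℕ) :=
    (fun (st : List (Int × ℕ)) (p : Int × ℕ) =>
      if p.1 = -1 ∧ st.head?.map Prod.fst = some 1 then st.tail else p :: st) with hfdef
  set sigs : List (Int × ℕ) :=
    (((L.zipIdx.map Prod.swap)).map fun p : ℕ × List ℕ => (colSign n p.2, p.1)).filter
      (fun p : Int × ℕ => p.1 ≠ 0) with hsigsdef
  set stack := sigs.foldl f [] with hstackdef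
  have hff : ∀ st p, f st p = p :: st ∨ f st p = st.tail := by
    intro st p
    rw [hfdef]
    dsimp only
    split
    · exact Or.inr rfl
    · exact Or.inl rfl
  have hpush : ∀ (st : List (Int × ℕ)) (x : Int × ℕ), x.1 = 1 → f st x = x :: st := by
    intro st x hx
    rw [hfdef]
    dsimp only
    rw [if_neg]
    rintro ⟨h, -⟩
    rw [hx] at h
    norm_num at h
  have hft : ftn n T =
      (match stack.reverse.find? (fun p : Int × ℕ => p.1 = 1) with
       | some p =>
         if p.2 < T.length then T.set p.2 (n :: (n - 1) :: T.getD p.2 []) else T ++ [[n, n - 1]]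
       | none => T) := rfl
  -- basic facts about sigs
  have hmem : ∀ x ∈ sigs, x.1 = colSign n (L.getD x.2 []) ∧ x.2 < L.length ∧ x.1 ≠ 0 := by
    intro x hx
    rw [hsigsdef, List.mem_filter] at hx
    obtain ⟨hx1, hx2⟩ := hx
    rw [List.mem_map] at hx1
    obtain ⟨a, ha, rfl⟩ := hx1
    rw [List.mem_map] at ha
    obtain ⟨b, hb, rfl⟩ := ha
    rw [List.mem_zipIdx_iff_getElem?] at hb
    obtain ⟨hlt, hget⟩ := List.getElem?_eq_some_iff.1 hb
    simp only [Prod.fst_swap, Prod.snd_swap] at hx2 ⊢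
    refine ⟨by rw [List.getD_eq_getElem _ _ hlt, hget], hlt, by simpa using hx2⟩
  have hmem' : ∀ j, j < L.length → colSign n (L.getD j []) ≠ 0 →
      (colSign n (L.getD j []), j) ∈ sigs := by
    intro j hj h0
    rw [hsigsdef, List.mem_filter]
    constructor
    · rw [List.mem_map]
      refine ⟨(j, L[j]), ?_, by rw [List.getD_eq_getElem _ _ hj]⟩
      rw [List.mem_map]
      exact ⟨(L[j], j), List.mem_zipIdx_iff_getElem?.2 (List.getElem?_eq_getElem hj), rfl⟩
    · simpa using h0
  have hpw : sigs.Pairwise (fun a b => a.2 < b.2) := by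
    rw [hsigsdef]
    apply List.Pairwise.sublist List.filter_sublist
    rw [List.pairwise_map, List.pairwise_map, List.pairwise_iff_getElem]
    intro i j hi hj hij
    simpa [List.getElem_zipIdx] using hij
  have hsub : ∀ x ∈ stack, x ∈ sigs := by
    obtain ⟨F, k, hEq, hF⟩ := fold_struct f hff sigs []
    rw [hstackdef, hEq, List.drop_nil, List.append_nil]
    exact hF
  rcases hfind : stack.reverse.find? (fun p : Int × ℕ => p.1 = 1) with _ | p
  · rw [hfind] at hft
    exact Or.inl hft
  · rw [hfind] at hft
    have hp1 : p.1 = 1 := by simpa using List.find?_some hfind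
    have hp_stack : p ∈ stack := by
      have := List.mem_of_find?_eq_some hfind
      rwa [List.mem_reverse] at this
    have hp_sigs : p ∈ sigs := hsub p hp_stack
    obtain ⟨hp_sign, hp_lt, -⟩ := hmem p hp_sigs
    have hLlen : L.length = T.length + 1 := by rw [hL]; simp
    right
    refine ⟨p.2, by omega, by rw [← hp_sign, hp1], ?_, ?_⟩
    · -- previous column does not have sign +1
      intro j hj hcs
      exfalso
      have hxmem : ((1 : Int), j) ∈ sigs := by
        have := hmem' j (by omega) (by rw [hcs]; norm_num)
        rwa [hcs] at this
      obtain ⟨l1, rest, hsplit⟩ := List.append_of_mem hxmem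
      rw [hsplit, List.pairwise_append] at hpw
      obtain ⟨hpw1, hpw2, hpw12⟩ := hpw
      have hp_rest : p ∈ rest := by
        have hmem2 : p ∈ l1 ++ ((1 : Int), j) :: rest := hsplit ▸ hp_sigs
        rcases List.mem_append.1 hmem2 with h | h
        · have := hpw12 p h ((1 : Int), j) List.mem_cons_self
          simp only at this
          omega
        · rcases List.mem_cons.1 h with h | h
          · exfalso
            have : p.2 = j := by rw [h]
            omega
          · exact h
      obtain ⟨r1, l2, hsplit2⟩ := List.append_of_mem hp_rest
      have hrest_pw : rest.Pairwise (fun a b : Int × ℕ => a.2 < b.2) :=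
        (List.pairwise_cons.1 hpw2).2
      have hrest_gt : ∀ y ∈ rest, j < y.2 := (List.pairwise_cons.1 hpw2).1
      have hr1 : r1 = [] := by
        cases r1 with
        | nil => rfl
        | cons a r =>
          exfalso
          have ha_rest : a ∈ rest := by
            rw [hsplit2]; exact List.mem_append_left _ List.mem_cons_self
          have h1 : j < a.2 := hrest_gt a ha_rest
          rw [hsplit2, List.pairwise_append] at hrest_pw
          have h2 : a.2 < p.2 :=
            hrest_pw.2.2 a List.mem_cons_self p List.mem_cons_self
          omega
      rw [hr1, List.nil_append] at hsplit2
      -- now sigs = l1 ++ (1,j) :: p :: l2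
      have hl1_lt : ∀ y ∈ l1, y.2 < j := by
        intro y hy
        exact hpw12 y hy ((1 : Int), j) List.mem_cons_self
      have hl2_gt : ∀ y ∈ l2, p.2 < y.2 := by
        intro y hy
        have : p ∈ rest := hp_rest
        rw [hsplit2] at hrest_pw
        exact (List.pairwise_cons.1 hrest_pw).1 y hy
      have hsigs_eq : sigs = l1 ++ ((1 : Int), j) :: p :: l2 := by rw [hsplit, hsplit2]
      -- compute the stack
      obtain ⟨F0, k0, hEq0, hF0⟩ := fold_struct f hff l1 []
      rw [List.drop_nil, List.append_nil] at hEq0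
      set st0 := l1.foldl f [] with hst0
      obtain ⟨F, k, hEq, hF⟩ := fold_struct f hff l2 (p :: ((1 : Int), j) :: st0)
      have hstack_eq : stack = F ++ (p :: ((1 : Int), j) :: st0).drop k := by
        rw [hstackdef, hsigs_eq, List.foldl_append, List.foldl_cons, List.foldl_cons,
          hpush _ (((1 : Int), j)) rfl, hpush _ _ hp1]
        exact hEq
      have hst0_lt : ∀ y ∈ st0, y.2 < j := by
        intro y hy
        rw [hEq0] at hy
        exact hl1_lt y (hF0 y hy)
      rcases k with _ | k'
      · -- the pushed p is still there, with (1,j) below it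
        rw [List.drop_zero] at hstack_eq
        have hrev : stack.reverse =
            (st0.reverse ++ [((1 : Int), j)]) ++ (p :: F.reverse) := by
          rw [hstack_eq]
          simp
        rw [hrev, List.find?_append] at hfind
        rcases hfind2 : List.find? (fun p : Int × ℕ => p.1 = 1)
            (st0.reverse ++ [((1 : Int), j)]) with _ | y
        · rw [List.find?_eq_none] at hfind2
          exact hfind2 ((1 : Int), j) (by simp) (by simp)
        · rw [hfind2] at hfind
          simp only [Option.some_or] at hfind
          have hy_eq : y = p := by simpa using hfind
          have hy_mem := List.mem_of_find?_eq_some hfind2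
          rcases List.mem_append.1 hy_mem with h | h
          · have := hst0_lt y (List.mem_reverse.1 h)
            rw [hy_eq] at this
            omega
          · simp only [List.mem_singleton] at h
            rw [hy_eq] at h
            have : p.2 = j := by rw [h]
            omega
      · -- p was popped: contradiction with p ∈ stack
        have : p ∈ F ∨ p ∈ (((1 : Int), j) :: st0).drop k' := by
          rw [hstack_eq] at hp_stack
          simpa using List.mem_append.1 hp_stack
        rcases this with h | h
        · have := hl2_gt p (hF p h)
          omega
        · have hmem3 := List.mem_of_mem_drop h
          rcases List.mem_cons.1 hmem3 with h | h
          · have : p.2 = j := by rw [h]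
            omega
          · have := hst0_lt p h
            omega
    · -- final shape
      have hft2 : ftn n T = (if p.2 < T.length then T.set p.2 (n :: (n - 1) :: T.getD p.2 [])
          else T ++ [[n, n - 1]]) := hft
      by_cases hi : p.2 < T.length
      · left
        rw [hft2, if_pos hi]
        exact ⟨hi, rfl⟩
      · right
        have : p.2 = T.length := by omega
        rw [hft2, if_neg hi]
        exact ⟨this, rfl⟩

theorem stmt13 (n : ℕ) (hn : 4 ≤ n) (T : List (List ℕ))
    (h1 : IsAntiSSYT n T) (h2 : ∀ col ∈ T, Even col.length) :
    IsAntiSSYT n (ftn n T) ∧ ∀ col ∈ ftn n T, Even col.length := by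
  obtain ⟨hcols, hchain⟩ := h1
  rcases ftn_spec n T with hEq | ⟨i, hi_le, hsig, hprev, hcase⟩
  · rw [hEq]; exact ⟨⟨hcols, hchain⟩, h2⟩
  rcases hcase with ⟨hi_lt, hEq⟩ | ⟨hi_eq, hEq⟩
  · -- domino added on top of existing column i
    have hgetD : T.getD i [] = T[i] := List.getD_eq_getElem _ _ hi_lt
    rw [List.getD_append _ _ _ _ hi_lt, hgetD] at hsig
    rw [hEq, hgetD]
    obtain ⟨hne, hv, hch⟩ := hcols T[i] (List.getElem_mem _)
    rcases colSign_one hsig with hnil | ⟨z, t, hzt, hz⟩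
    · exact absurd hnil hne
    have hEvci : Even T[i].length := h2 _ (List.getElem_mem _)
    refine ⟨⟨?_, ?_⟩, ?_⟩
    · -- columns valid
      intro col hcol
      rcases List.mem_or_eq_of_mem_set hcol with hcol | rfl
      · exact hcols col hcol
      · refine ⟨by simp, ?_, ?_⟩
        · intro x hx
          rcases List.mem_cons.1 hx with rfl | hx
          · omega
          rcases List.mem_cons.1 hx with rfl | hx
          · omega
          · have := hv x hx; omega
        · rw [hzt, List.Chain', List.isChain_cons_cons, List.isChain_cons_cons]
          exact ⟨by omega, by omega, by rw [← hzt]; exact hch⟩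
    · -- shape chain
      rw [List.Chain', List.isChain_iff_getElem]
      intro j hj
      simp only [List.length_set] at hj
      simp only [List.get_eq_getElem, List.getElem_set]
      have hRj : T[j + 1].length ≤ T[j].length ∧ ∀ r, r < T[j + 1].length →
          T[j].getD (T[j].length - 1 - r) 0 ≤ T[j + 1].getD (T[j + 1].length - 1 - r) 0 := by
        have := List.isChain_iff_getElem.1 hchain j hj
        simpa using this
      obtain ⟨hlen, hrow⟩ := hRj
      by_cases hij : i = j
      · -- new column on the right side of the pair
        rw [if_pos hij, if_neg (by omega : ¬ i = j + 1)]
        subst hij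
        refine ⟨by simp only [List.length_cons]; omega, ?_⟩
        intro r hr
        have hidx : (n :: (n - 1) :: T[i]).length - 1 - r = (T[i].length - 1 - r) + 2 := by
          have : r < T[i].length := lt_of_lt_of_le hr hlen
          simp only [List.length_cons]; omega
        rw [hidx, List.getD_cons_succ, List.getD_cons_succ]
        exact hrow r hr
      · by_cases hij2 : i = j + 1
        · -- new column on the left side of the pair
          rw [if_neg hij, if_pos hij2]
          subst hij2
          -- facts about the right column T[j]
          have hjlt : j < T.length := by omega
          have hprevj := hprev j rfl
          rw [List.getD_append _ _ _ _ hjlt, List.getD_eq_getElem _ _ hjlt] at hprevj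
          obtain ⟨hne2, hv2, hch2⟩ := hcols T[j] (List.getElem_mem _)
          obtain ⟨w, s, hws, hw⟩ := colSign_ne_one hv2 hch2 hprevj
          have hL1 : 1 ≤ T[j + 1].length := by rw [hzt]; simp
          have hlen2 : T[j + 1].length + 2 ≤ T[j].length := by
            have hneq : T[j + 1].length ≠ T[j].length := by
              intro heq
              have h0 : T[j + 1].length - 1 < T[j + 1].length := by omega
              have hr0 := hrow (T[j + 1].length - 1) h0
              have e1 : T[j].length - 1 - (T[j + 1].length - 1) = 0 := by omega
              have e2 : T[j + 1].length - 1 - (T[j + 1].length - 1) = 0 := by omega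
              rw [e1, e2, hws, hzt, List.getD_cons_zero, List.getD_cons_zero] at hr0
              omega
            obtain ⟨a, ha⟩ := h2 T[j] (List.getElem_mem _)
            obtain ⟨b, hb⟩ := hEvci
            omega
          refine ⟨by simp only [List.length_cons]; omega, ?_⟩
          intro r hr
          simp only [List.length_cons] at hr ⊢
          rcases (by omega : r < T[j + 1].length ∨ r = T[j + 1].length ∨
              r = T[j + 1].length + 1) with h | h | h
          · have hidx : T[j + 1].length + 1 + 1 - 1 - r = (T[j + 1].length - 1 - r) + 2 := by
              omega
            rw [hidx, List.getD_cons_succ, List.getD_cons_succ]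
            exact hrow r h
          · have hidx : T[j + 1].length + 1 + 1 - 1 - r = 1 := by omega
            rw [hidx, List.getD_cons_succ, List.getD_cons_zero]
            exact colValid_getD_lt hv2 hch2 (by omega) (by omega)
          · have hidx : T[j + 1].length + 1 + 1 - 1 - r = 0 := by omega
            rw [hidx, List.getD_cons_zero]
            exact colValid_getD_le hv2 _
        · rw [if_neg hij, if_neg hij2]
          exact ⟨hlen, hrow⟩
    · -- even lengths
      intro col hcol
      rcases List.mem_or_eq_of_mem_set hcol with hcol | rfl
      · exact h2 col hcol
      · obtain ⟨b, hb⟩ := hEvci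
        exact ⟨b + 1, by simp only [List.length_cons]; omega⟩
  · -- new column appended on the left
    rw [hEq]
    refine ⟨⟨?_, ?_⟩, ?_⟩
    · intro col hcol
      rcases List.mem_append.1 hcol with hcol | hcol
      · exact hcols col hcol
      · simp only [List.mem_singleton] at hcol
        subst hcol
        refine ⟨by simp, ?_, ?_⟩
        · intro x hx
          simp only [List.mem_cons, List.not_mem_nil, or_false] at hx
          rcases hx with rfl | rfl <;> omega
        · rw [List.Chain', List.isChain_cons_cons]
          exact ⟨by omega, List.isChain_singleton _⟩
    · rw [List.Chain', List.isChain_append]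
      refine ⟨hchain, List.isChain_singleton _, ?_⟩
      intro x hx y hy
      simp only [List.head?_cons, Option.mem_def, Option.some.injEq] at hy
      subst hy
      have hxmem : x ∈ T := List.mem_of_mem_getLast? hx
      obtain ⟨hne2, hv2, hch2⟩ := hcols x hxmem
      have hx2 : 2 ≤ x.length := by
        obtain ⟨a, ha⟩ := h2 x hxmem
        have := List.length_pos_iff.2 hne2
        omega
      refine ⟨by simp; omega, ?_⟩
      intro r hr
      simp only [List.length_cons, List.length_nil] at hr ⊢
      rcases (by omega : r = 0 ∨ r = 1) with rfl | rfl
      · have hidx : 0 + 1 + 1 - 1 - 0 = 1 := by omega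
        rw [hidx, List.getD_cons_succ, List.getD_cons_zero]
        exact colValid_getD_lt hv2 hch2 (by omega) (by omega)
      · have hidx : 0 + 1 + 1 - 1 - 1 = 0 := by omega
        rw [hidx, List.getD_cons_zero]
        exact colValid_getD_le hv2 _
    · intro col hcol
      rcases List.mem_append.1 hcol with hcol | hcol
      · exact h2 col hcol
      · simp only [List.mem_singleton] at hcol
        subst hcol
        exact ⟨1, rfl⟩
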